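/- For every dimension d ≥ 1 there exists a finite constant C = C(d) such that for any ℓ ∈ ℕ there exists a flow φ_ℓ in ℤ^d connecting the point mass at 0 to q_ℓ, with support contained in Λ_{2ℓ−1}, satisfying Σ_{z∈ℤ^d, b∈B} φ_ℓ(z;b)² ≤ C g_d(ℓ) and Σ_{z∈ℤ^d, b∈B} |φ_ℓ(z;b)| ≤ C ℓ. -/

import Mathlib

open Finset Real

/-- The canonical basis vector `e_i` of `ℤ^d`. -/
def eZ (d : ℕ) (i : Fin d) : Fin d → ℤ := fun j => if j = i then 1 else 0

/-- The cube `Λ_ℓ = {z ∈ ℤ^d : 0 ≤ z_i ≤ ℓ-1}`. -/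
noncomputable def Lam (d ℓ : ℕ) : Finset (Fin d → ℤ) := Fintype.piFinset fun _ => Finset.Icc 0 ((ℓ : ℤ) - 1)

/-- The uniform probability measure `p_ℓ` on `Λ_ℓ`. -/
noncomputable def punif (d ℓ : ℕ) (z : Fin d → ℤ) : ℝ :=
  if z ∈ Lam d ℓ then ((ℓ : ℝ) ^ d)⁻¹ else 0

/-- The convolution `q_ℓ = p_ℓ ∗ p_ℓ` (`p_ℓ` vanishes outside `Λ_ℓ`, so the sum is finite). -/
noncomputable def qconv (d ℓ : ℕ) (z : Fin d → ℤ) : ℝ :=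
  ∑ y ∈ Lam d ℓ, punif d ℓ y * punif d ℓ (z - y)

/-- The point mass at the origin of `ℤ^d`. -/
def delta0 (d : ℕ) (z : Fin d → ℤ) : ℝ := if z = 0 then 1 else 0

/-- The support of the flow `φ` is contained in `Λ`. -/
def SupportedIn (d : ℕ) (φ : (Fin d → ℤ) → Fin d → ℝ) (Λ : Finset (Fin d → ℤ)) : Prop :=
  ∀ z i, φ z i ≠ 0 → z ∈ Λ ∧ z + eZ d i ∈ Λ

/-- The flow `φ` connects `p` to `q`:
`p(z) - q(z) = Σ_b (φ(z;b) - φ(z-b;b))` for every `z ∈ ℤ^d`. -/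
def Connects (d : ℕ) (φ : (Fin d → ℤ) → Fin d → ℝ) (p q : (Fin d → ℤ) → ℝ) : Prop :=
  ∀ z, p z - q z = ∑ i : Fin d, (φ z i - φ (z - eZ d i) i)

/-- `g_d(ℓ) = ℓ` if `d = 1`, `log ℓ` if `d = 2`, `1` if `d ≥ 3`. -/
noncomputable def gd (d ℓ : ℕ) : ℝ := if d = 1 then (ℓ : ℝ) else if d = 2 then Real.log ℓ else 1



namespace FlowAux

/-- uniform density on {0,...,s-1} -/
noncomputable def u (s : ℕ) (x : ℤ) : ℝ := if 0 ≤ x ∧ x < (s:ℤ) then ((s:ℝ))⁻¹ else 0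

/-- triangular density: convolution u ℓ * u ℓ -/
noncomputable def tri (ℓ : ℕ) (x : ℤ) : ℝ :=
  ∑ y ∈ Finset.Icc (0:ℤ) ((ℓ:ℤ)-1), u ℓ y * u ℓ (x - y)

noncomputable def cum (f : ℤ → ℝ) (x : ℤ) : ℝ :=
  if 0 ≤ x then ∑ y ∈ Finset.Icc 0 x, f y else 0

lemma u_nonneg (s : ℕ) (x : ℤ) : 0 ≤ u s x := by
  unfold u; split <;> positivity

lemma u_le (s : ℕ) (x : ℤ) : u s x ≤ ((s:ℝ))⁻¹ := by
  unfold u; split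
  · exact le_refl _
  · positivity

lemma u_support {s : ℕ} {x : ℤ} (h : u s x ≠ 0) : 0 ≤ x ∧ x ≤ (s:ℤ) - 1 := by
  unfold u at h
  by_cases hc : 0 ≤ x ∧ x < (s:ℤ)
  · exact ⟨hc.1, by omega⟩
  · simp [hc] at h

lemma u_eq_zero {s : ℕ} {x : ℤ} (h : ¬ (0 ≤ x ∧ x ≤ (s:ℤ) - 1)) : u s x = 0 := by
  unfold u; rw [if_neg]; omega

lemma sum_u_Icc (s : ℕ) (hs : 1 ≤ s) : ∑ x ∈ Finset.Icc (0:ℤ) ((s:ℤ)-1), u s x = 1 := by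
  have h : ∀ x ∈ Finset.Icc (0:ℤ) ((s:ℤ)-1), u s x = ((s:ℝ))⁻¹ := by
    intro x hx
    simp only [Finset.mem_Icc] at hx
    unfold u; rw [if_pos]; omega
  rw [Finset.sum_congr rfl h, Finset.sum_const]
  rw [Int.card_Icc]
  have : ((s:ℤ) - 1 + 1 - 0).toNat = s := by omega
  rw [this]
  rw [nsmul_eq_mul]; exact mul_inv_cancel₀ (Nat.cast_ne_zero.mpr (by omega))

/-- partial sums of u over any finite set are ≤ 1 -/
lemma sum_u_le_one (s : ℕ) (hs : 1 ≤ s) (T : Finset ℤ) : ∑ x ∈ T, u s x ≤ 1 := by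
  have h1 : ∑ x ∈ T, u s x ≤ ∑ x ∈ T ∪ Finset.Icc (0:ℤ) ((s:ℤ)-1), u s x :=
    Finset.sum_le_sum_of_subset_of_nonneg Finset.subset_union_left
      (fun x _ _ => u_nonneg s x)
  have h2 : ∑ x ∈ T ∪ Finset.Icc (0:ℤ) ((s:ℤ)-1), u s x
      = ∑ x ∈ Finset.Icc (0:ℤ) ((s:ℤ)-1), u s x := by
    refine Finset.sum_subset Finset.subset_union_right ?_ |>.symm
    intro x _ hx
    exact u_eq_zero (by simpa using hx)
  rw [h2, sum_u_Icc s hs] at h1; exact h1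


lemma sum_u_shift_le_one (s : ℕ) (hs : 1 ≤ s) (T : Finset ℤ) (y : ℤ) :
    ∑ x ∈ T, u s (x - y) ≤ 1 := by
  have : ∑ x ∈ T, u s (x - y) = ∑ x ∈ T.map (addRightEmbedding (-y)), u s x := by
    rw [Finset.sum_map]
    refine Finset.sum_congr rfl fun x _ => ?_
    simp [addRightEmbedding, sub_eq_add_neg]
  rw [this]; exact sum_u_le_one s hs _

lemma tri_nonneg (ℓ : ℕ) (x : ℤ) : 0 ≤ tri ℓ x :=
  Finset.sum_nonneg fun y _ => mul_nonneg (u_nonneg _ _) (u_nonneg _ _)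

lemma tri_le (ℓ : ℕ) (hl : 1 ≤ ℓ) (x : ℤ) : tri ℓ x ≤ ((ℓ:ℝ))⁻¹ := by
  unfold tri
  calc ∑ y ∈ Finset.Icc (0:ℤ) ((ℓ:ℤ)-1), u ℓ y * u ℓ (x - y)
      ≤ ∑ y ∈ Finset.Icc (0:ℤ) ((ℓ:ℤ)-1), u ℓ y * ((ℓ:ℝ))⁻¹ := by
        refine Finset.sum_le_sum fun y _ => ?_
        exact mul_le_mul_of_nonneg_left (u_le _ _) (u_nonneg _ _)
    _ = (∑ y ∈ Finset.Icc (0:ℤ) ((ℓ:ℤ)-1), u ℓ y) * ((ℓ:ℝ))⁻¹ := by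
        rw [Finset.sum_mul]
    _ = ((ℓ:ℝ))⁻¹ := by rw [sum_u_Icc ℓ hl, one_mul]

lemma tri_eq_zero (ℓ : ℕ) {x : ℤ} (h : ¬ (0 ≤ x ∧ x ≤ 2*(ℓ:ℤ) - 2)) : tri ℓ x = 0 := by
  unfold tri
  refine Finset.sum_eq_zero fun y hy => ?_
  simp only [Finset.mem_Icc] at hy
  rcases not_and_or.mp h with h1 | h1
  · have : u ℓ (x - y) = 0 := u_eq_zero (by omega)
    rw [this, mul_zero]
  · have : u ℓ (x - y) = 0 := u_eq_zero (by omega)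
    rw [this, mul_zero]

lemma sum_tri_le_one (ℓ : ℕ) (hl : 1 ≤ ℓ) (T : Finset ℤ) : ∑ x ∈ T, tri ℓ x ≤ 1 := by
  unfold tri
  rw [Finset.sum_comm]
  calc ∑ y ∈ Finset.Icc (0:ℤ) ((ℓ:ℤ)-1), ∑ x ∈ T, u ℓ y * u ℓ (x - y)
      = ∑ y ∈ Finset.Icc (0:ℤ) ((ℓ:ℤ)-1), u ℓ y * ∑ x ∈ T, u ℓ (x - y) := by
        refine Finset.sum_congr rfl fun y _ => ?_; rw [Finset.mul_sum]
    _ ≤ ∑ y ∈ Finset.Icc (0:ℤ) ((ℓ:ℤ)-1), u ℓ y * 1 := by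
        refine Finset.sum_le_sum fun y _ => ?_
        exact mul_le_mul_of_nonneg_left (sum_u_shift_le_one ℓ hl T y) (u_nonneg _ _)
    _ ≤ 1 := by
        simp only [mul_one]
        rw [sum_u_Icc ℓ hl]

lemma cum_nonneg {f : ℤ → ℝ} (hf : ∀ x, 0 ≤ f x) (x : ℤ) : 0 ≤ cum f x := by
  unfold cum; split
  · exact Finset.sum_nonneg fun y _ => hf y
  · exact le_refl 0

lemma cum_le_one {f : ℤ → ℝ} (hf : ∀ T : Finset ℤ, ∑ x ∈ T, f x ≤ 1) (x : ℤ) :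
    cum f x ≤ 1 := by
  unfold cum; split
  · exact hf _
  · exact zero_le_one

lemma Icc_succ (x : ℤ) (hx : 1 ≤ x) :
    Finset.Icc (0:ℤ) x = insert x (Finset.Icc 0 (x-1)) := by
  ext w; simp only [Finset.mem_Icc, Finset.mem_insert]; omega

lemma cum_step {f : ℤ → ℝ} (hf : ∀ x < 0, f x = 0) (x : ℤ) :
    cum f x - cum f (x-1) = f x := by
  rcases lt_trichotomy x 0 with h | h | h
  · unfold cum
    rw [if_neg (by omega), if_neg (by omega), hf x h, sub_zero]
  · subst h
    unfold cum
    rw [if_pos (le_refl 0), if_neg (by omega)]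
    simp
  · unfold cum
    rw [if_pos (by omega), if_pos (by omega), Icc_succ x h,
      Finset.sum_insert (by simp)]
    ring

lemma cum_u_full (s : ℕ) (hs : 1 ≤ s) {x : ℤ} (hx : (s:ℤ) - 1 ≤ x) : cum (u s) x = 1 := by
  unfold cum
  rw [if_pos (by omega)]
  rw [← sum_u_Icc s hs]
  refine (Finset.sum_subset ?_ ?_).symm
  · intro w hw; simp only [Finset.mem_Icc] at *; omega
  · intro w _ hw
    exact u_eq_zero (by simp only [Finset.mem_Icc] at hw; omega)

lemma sum_u_shift_Icc (s : ℕ) (hs : 1 ≤ s) {x y : ℤ} (hx : 0 ≤ x) (hy : 0 ≤ y) :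
    ∑ w ∈ Finset.Icc (0:ℤ) x, u s (w - y) = cum (u s) (x - y) := by
  have h1 : ∑ w ∈ Finset.Icc (0:ℤ) x, u s (w - y)
      = ∑ w ∈ Finset.Icc (-y) (x - y), u s w := by
    rw [show Finset.Icc (-y) (x-y) = (Finset.Icc (0:ℤ) x).map (addRightEmbedding (-y)) by
      rw [Finset.map_add_right_Icc]; ring_nf]
    rw [Finset.sum_map]
    refine Finset.sum_congr rfl fun w _ => ?_
    simp [addRightEmbedding, sub_eq_add_neg]
  rw [h1]
  rcases le_or_gt 0 (x - y) with h | h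
  · unfold cum
    rw [if_pos h]
    refine (Finset.sum_subset ?_ ?_).symm
    · intro w hw; simp only [Finset.mem_Icc] at *; omega
    · intro w hw1 hw2
      simp only [Finset.mem_Icc] at hw1 hw2
      exact u_eq_zero (by omega)
  · unfold cum
    rw [if_neg (by omega)]
    refine Finset.sum_eq_zero fun w hw => ?_
    simp only [Finset.mem_Icc] at hw
    exact u_eq_zero (by omega)

lemma cum_tri (ℓ : ℕ) (hl : 1 ≤ ℓ) {x : ℤ} (hx : 0 ≤ x) :
    cum (tri ℓ) x = ∑ y ∈ Finset.Icc (0:ℤ) ((ℓ:ℤ)-1), u ℓ y * cum (u ℓ) (x - y) := by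
  have h0 : cum (tri ℓ) x = ∑ w ∈ Finset.Icc (0:ℤ) x, tri ℓ w := by
    unfold cum; rw [if_pos hx]
  rw [h0]
  unfold tri
  rw [Finset.sum_comm]
  refine Finset.sum_congr rfl fun y hy => ?_
  simp only [Finset.mem_Icc] at hy
  rw [← Finset.mul_sum, sum_u_shift_Icc ℓ hl hx hy.1]

lemma cum_tri_full (ℓ : ℕ) (hl : 1 ≤ ℓ) {x : ℤ} (hx : 2*(ℓ:ℤ) - 2 ≤ x) :
    cum (tri ℓ) x = 1 := by
  rw [cum_tri ℓ hl (by omega)]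
  have h : ∀ y ∈ Finset.Icc (0:ℤ) ((ℓ:ℤ)-1), u ℓ y * cum (u ℓ) (x - y) = u ℓ y := by
    intro y hy
    simp only [Finset.mem_Icc] at hy
    rw [cum_u_full ℓ hl (by omega), mul_one]
  rw [Finset.sum_congr rfl h, sum_u_Icc ℓ hl]


section Scales
variable (ℓ : ℕ)

def K : ℕ := Nat.clog 2 ℓ

def sc (k : ℕ) : ℕ := if k < K ℓ then 2^k else ℓ

noncomputable def ρ (k : ℕ) : ℤ → ℝ := if k ≤ K ℓ then u (sc ℓ k) else tri ℓ

noncomputable def ψ (k : ℕ) (x : ℤ) : ℝ := cum (ρ ℓ (k-1)) x - cum (ρ ℓ k) x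

variable {ℓ} (hl : 2 ≤ ℓ)
include hl

lemma l_le_pow : ℓ ≤ 2 ^ K ℓ := Nat.le_pow_clog (by norm_num) ℓ

lemma K_pos : 1 ≤ K ℓ := by
  by_contra h
  have h0 : K ℓ = 0 := by omega
  have := l_le_pow hl
  rw [h0] at this
  simp at this; omega

lemma pow_pred_lt : 2 ^ (K ℓ - 1) < ℓ := Nat.pow_pred_clog_lt_self (by norm_num) hl

lemma sc_pos (k : ℕ) : 1 ≤ sc ℓ k := by
  unfold sc; split
  · exact Nat.one_le_two_pow
  · omega

lemma sc_le_pow {k : ℕ} : sc ℓ k ≤ 2 ^ k := by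
  unfold sc; split
  · exact le_refl _
  · calc ℓ ≤ 2 ^ K ℓ := l_le_pow hl
      _ ≤ 2 ^ k := Nat.pow_le_pow_right (by norm_num) (by omega)

lemma pow_pred_le_sc {k : ℕ} (hk : k ≤ K ℓ) : 2 ^ (k-1) ≤ sc ℓ k := by
  unfold sc; split
  · exact Nat.pow_le_pow_right (by norm_num) (by omega)
  · have h1 : k = K ℓ := by omega
    subst h1
    exact (pow_pred_lt hl).le

lemma sc_le_l {k : ℕ} (hk : k ≤ K ℓ) : sc ℓ k ≤ ℓ := by
  unfold sc; split
  · calc (2:ℕ)^k ≤ 2 ^ (K ℓ - 1) := Nat.pow_le_pow_right (by norm_num) (by omega)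
      _ ≤ ℓ := (pow_pred_lt hl).le
  · exact le_refl ℓ

lemma rho_nonneg (k : ℕ) (x : ℤ) : 0 ≤ ρ ℓ k x := by
  unfold ρ; split
  · exact u_nonneg _ _
  · exact tri_nonneg _ _

omit hl in
lemma inv_pow_le_aux {a b : ℕ} (h : 2^a ≤ 4 * 2^b) : ((2:ℝ)^b)⁻¹ ≤ 4 / 2^a := by
  have hr : (2:ℝ)^a ≤ 4 * 2^b := by exact_mod_cast h
  have h1 : (0:ℝ) < 2^b := by positivity
  have h2 : (0:ℝ) < 2^a := by positivity
  rw [inv_eq_one_div, div_le_div_iff₀ h1 h2]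
  linarith

lemma rho_le {k : ℕ} (hk : k ≤ K ℓ + 1) (x : ℤ) : ρ ℓ k x ≤ 4 / 2 ^ k := by
  unfold ρ; split
  · calc u (sc ℓ k) x ≤ ((sc ℓ k : ℝ))⁻¹ := u_le _ _
      _ ≤ ((2:ℝ) ^ (k-1))⁻¹ := by
          apply inv_anti₀ (by positivity)
          have hn : 2^(k-1) ≤ sc ℓ k := pow_pred_le_sc hl (by assumption)
          exact_mod_cast hn
      _ ≤ 4 / 2 ^ k := by
          apply inv_pow_le_aux
          rcases Nat.eq_zero_or_pos k with h0 | h0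
          · subst h0; norm_num
          · have : k - 1 + 1 = k := by omega
            calc 2^k = 2^(k-1+1) := by rw [this]
              _ = 2 * 2^(k-1) := by rw [pow_succ]; ring
              _ ≤ 4 * 2^(k-1) := by omega
  · rename_i hnot
    have hk' : k = K ℓ + 1 := by omega
    calc tri ℓ x ≤ ((ℓ:ℝ))⁻¹ := tri_le ℓ (by omega) x
      _ ≤ ((2:ℝ) ^ (K ℓ - 1))⁻¹ := by
          apply inv_anti₀ (by positivity)
          exact_mod_cast (pow_pred_lt hl).le
      _ ≤ 4 / 2 ^ k := by
          apply inv_pow_le_aux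
          have hK := K_pos hl
          have h1 : K ℓ - 1 + 2 = K ℓ + 1 := by omega
          subst hk'
          calc 2^(K ℓ + 1) = 2^(K ℓ - 1 + 2) := by rw [h1]
            _ = 4 * 2^(K ℓ - 1) := by rw [pow_add]; ring
            _ ≤ 4 * 2^(K ℓ - 1) := le_refl _

lemma rho_sum_le (k : ℕ) (T : Finset ℤ) : ∑ x ∈ T, ρ ℓ k x ≤ 1 := by
  unfold ρ; split
  · exact sum_u_le_one _ (sc_pos hl k) T
  · exact sum_tri_le_one ℓ (by omega) T

lemma rho_support {k : ℕ} (hk : k ≤ K ℓ + 1) {x : ℤ} (h : ρ ℓ k x ≠ 0) :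
    0 ≤ x ∧ x ≤ 2*(ℓ:ℤ) - 2 := by
  unfold ρ at h; split at h
  · have h2 := u_support h
    have h3 : sc ℓ k ≤ ℓ := sc_le_l hl (by assumption)
    constructor
    · exact h2.1
    · have : (sc ℓ k : ℤ) ≤ (ℓ:ℤ) := by exact_mod_cast h3
      omega
  · by_contra hc
    exact h (tri_eq_zero ℓ (by omega))

omit hl in
lemma rho_zero_neg (k : ℕ) {x : ℤ} (hx : x < 0) : ρ ℓ k x = 0 := by
  unfold ρ; split
  · exact u_eq_zero (by omega)
  · exact tri_eq_zero ℓ (by omega)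

lemma cum_rho_full {k : ℕ} (hk : k ≤ K ℓ + 1) {x : ℤ} (hx : (2:ℤ)^k - 1 ≤ x) :
    cum (ρ ℓ k) x = 1 := by
  unfold ρ; split
  · apply cum_u_full _ (sc_pos hl k)
    have : (sc ℓ k : ℤ) ≤ (2:ℤ)^k := by exact_mod_cast (sc_le_pow hl (k := k))
    omega
  · apply cum_tri_full ℓ (by omega)
    have hk' : k = K ℓ + 1 := by omega
    have h2 : (ℓ:ℤ) ≤ (2:ℤ)^(K ℓ) := by exact_mod_cast l_le_pow hl
    subst hk'
    have : (2:ℤ)^(K ℓ + 1) = 2 * 2^(K ℓ) := by ring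
    omega

lemma cum_rho_full_l {k : ℕ} (hk : k ≤ K ℓ + 1) {x : ℤ} (hx : 2*(ℓ:ℤ) - 2 ≤ x) :
    cum (ρ ℓ k) x = 1 := by
  unfold ρ; split
  · apply cum_u_full _ (sc_pos hl k)
    have h3 : sc ℓ k ≤ ℓ := sc_le_l hl (by assumption)
    have : (sc ℓ k : ℤ) ≤ (ℓ:ℤ) := by exact_mod_cast h3
    omega
  · exact cum_tri_full ℓ (by omega) hx

lemma cum_rho_mem (k : ℕ) (x : ℤ) : 0 ≤ cum (ρ ℓ k) x ∧ cum (ρ ℓ k) x ≤ 1 :=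
  ⟨cum_nonneg (rho_nonneg hl k) x, cum_le_one (rho_sum_le hl k) x⟩

lemma psi_abs_le_one (k : ℕ) (x : ℤ) : |ψ ℓ k x| ≤ 1 := by
  unfold ψ
  have h1 := cum_rho_mem hl (k-1) x
  have h2 := cum_rho_mem hl k x
  rw [abs_sub_le_iff]
  constructor <;> linarith

omit hl in
lemma psi_zero_neg (k : ℕ) {x : ℤ} (hx : x < 0) : ψ ℓ k x = 0 := by
  unfold ψ cum
  rw [if_neg (by omega), if_neg (by omega), sub_zero]

lemma psi_zero_ge {k : ℕ} (hk : 1 ≤ k) (hk2 : k ≤ K ℓ + 1) {x : ℤ}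
    (hx : (2:ℤ)^k - 1 ≤ x) : ψ ℓ k x = 0 := by
  unfold ψ
  rw [cum_rho_full hl (by omega) (by
    have : (2:ℤ)^(k-1) ≤ 2^k := by
      apply pow_le_pow_right₀ (by norm_num) (by omega)
    omega), cum_rho_full hl hk2 hx, sub_self]

lemma psi_zero_ge_l {k : ℕ} (hk : 1 ≤ k) (hk2 : k ≤ K ℓ + 1) {x : ℤ}
    (hx : 2*(ℓ:ℤ) - 2 ≤ x) : ψ ℓ k x = 0 := by
  unfold ψ
  rw [cum_rho_full_l hl (by omega) hx, cum_rho_full_l hl hk2 hx, sub_self]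

omit hl in
lemma psi_step (k : ℕ) (x : ℤ) :
    ψ ℓ k x - ψ ℓ k (x-1) = ρ ℓ (k-1) x - ρ ℓ k x := by
  unfold ψ
  have h1 := cum_step (f := ρ ℓ (k-1)) (fun y hy => rho_zero_neg (ℓ := ℓ) (k-1) hy) x
  have h2 := cum_step (f := ρ ℓ k) (fun y hy => rho_zero_neg (ℓ := ℓ) k hy) x
  linarith

end Scales


section Multi
variable (d : ℕ)

noncomputable def Ffac (ℓ k : ℕ) (c j : Fin d) : ℤ → ℝ :=
  if j = c then ψ ℓ k else if (j:ℕ) < (c:ℕ) then ρ ℓ k else ρ ℓ (k-1)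

noncomputable def st (ℓ k : ℕ) (c : Fin d) (z : Fin d → ℤ) : ℝ :=
  ∏ j, Ffac d ℓ k c j (z j)

noncomputable def flow (ℓ : ℕ) (z : Fin d → ℤ) (i : Fin d) : ℝ :=
  ∑ k ∈ Finset.Icc 1 (K ℓ + 1), st d ℓ k i z

/-- intermediate product measures -/
noncomputable def Nfun (ℓ k : ℕ) (c : ℕ) (z : Fin d → ℤ) : ℝ :=
  ∏ j : Fin d, (if (j:ℕ) < c then ρ ℓ k else ρ ℓ (k-1)) (z j)

noncomputable def Mfun (ℓ k : ℕ) (z : Fin d → ℤ) : ℝ := ∏ j : Fin d, ρ ℓ k (z j)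

variable {ℓ : ℕ} (hl : 2 ≤ ℓ)
include hl

omit hl in
lemma sub_eZ_apply (z : Fin d → ℤ) (c j : Fin d) :
    (z - eZ d c) j = z j - (if j = c then 1 else 0) := by
  simp [eZ, Pi.sub_apply]

omit hl in
lemma st_div (k : ℕ) (c : Fin d) (z : Fin d → ℤ) :
    st d ℓ k c z - st d ℓ k c (z - eZ d c)
      = (ρ ℓ (k-1) (z c) - ρ ℓ k (z c)) * ∏ j ∈ Finset.univ.erase c, Ffac d ℓ k c j (z j) := by
  unfold st
  rw [← Finset.mul_prod_erase Finset.univ (fun j => Ffac d ℓ k c j (z j)) (Finset.mem_univ c),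
      ← Finset.mul_prod_erase Finset.univ (fun j => Ffac d ℓ k c j ((z - eZ d c) j)) (Finset.mem_univ c)]
  have h1 : ∀ j ∈ Finset.univ.erase c, Ffac d ℓ k c j ((z - eZ d c) j) = Ffac d ℓ k c j (z j) := by
    intro j hj
    have hj' : j ≠ c := Finset.ne_of_mem_erase hj
    rw [sub_eZ_apply, if_neg hj', sub_zero]
  rw [Finset.prod_congr rfl h1]
  have h2 : Ffac d ℓ k c c ((z - eZ d c) c) = ψ ℓ k (z c - 1) := by
    rw [sub_eZ_apply, if_pos rfl]
    unfold Ffac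
    rw [if_pos rfl]
  have h3 : Ffac d ℓ k c c (z c) = ψ ℓ k (z c) := by unfold Ffac; rw [if_pos rfl]
  rw [h2, h3, ← sub_mul, psi_step (ℓ := ℓ) k (z c)]

omit hl in
lemma Nfun_diff (k : ℕ) (c : Fin d) (z : Fin d → ℤ) :
    Nfun d ℓ k (c:ℕ) z - Nfun d ℓ k ((c:ℕ)+1) z
      = (ρ ℓ (k-1) (z c) - ρ ℓ k (z c)) * ∏ j ∈ Finset.univ.erase c, Ffac d ℓ k c j (z j) := by
  unfold Nfun
  rw [← Finset.mul_prod_erase Finset.univ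
        (fun j : Fin d => (if (j:ℕ) < (c:ℕ) then ρ ℓ k else ρ ℓ (k-1)) (z j)) (Finset.mem_univ c),
      ← Finset.mul_prod_erase Finset.univ
        (fun j : Fin d => (if (j:ℕ) < (c:ℕ)+1 then ρ ℓ k else ρ ℓ (k-1)) (z j)) (Finset.mem_univ c)]
  have e1 : ∀ j ∈ Finset.univ.erase c,
      (if (j:ℕ) < (c:ℕ) then ρ ℓ k else ρ ℓ (k-1)) (z j) = Ffac d ℓ k c j (z j) := by
    intro j hj
    have hj' : j ≠ c := Finset.ne_of_mem_erase hj
    unfold Ffac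
    rw [if_neg hj']
  have e2 : ∀ j ∈ Finset.univ.erase c,
      (if (j:ℕ) < (c:ℕ)+1 then ρ ℓ k else ρ ℓ (k-1)) (z j) = Ffac d ℓ k c j (z j) := by
    intro j hj
    have hj' : j ≠ c := Finset.ne_of_mem_erase hj
    have hj2 : (j:ℕ) ≠ (c:ℕ) := fun h => hj' (Fin.ext h)
    unfold Ffac
    rw [if_neg hj']
    rcases lt_or_ge (j:ℕ) (c:ℕ) with h | h
    · rw [if_pos (by omega), if_pos h]
    · rw [if_neg (by omega), if_neg (by omega)]
  rw [Finset.prod_congr rfl e1, Finset.prod_congr rfl e2]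
  rw [if_neg (by omega), if_pos (by omega)]
  ring

omit hl in
lemma div_eq_telescope (k : ℕ) (z : Fin d → ℤ) :
    ∑ i : Fin d, (st d ℓ k i z - st d ℓ k i (z - eZ d i))
      = Mfun d ℓ (k-1) z - Mfun d ℓ k z := by
  have h1 : ∀ i : Fin d, st d ℓ k i z - st d ℓ k i (z - eZ d i)
      = Nfun d ℓ k (i:ℕ) z - Nfun d ℓ k ((i:ℕ)+1) z := by
    intro i
    rw [st_div, Nfun_diff]
  rw [Finset.sum_congr rfl (fun i _ => h1 i)]
  rw [Fin.sum_univ_eq_sum_range (fun c => Nfun d ℓ k c z - Nfun d ℓ k (c+1) z) d]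
  rw [Finset.sum_range_sub' (fun c => Nfun d ℓ k c z) d]
  have h2 : Nfun d ℓ k 0 z = Mfun d ℓ (k-1) z := by
    unfold Nfun Mfun
    refine Finset.prod_congr rfl fun j _ => ?_
    rw [if_neg (by omega)]
  have h3 : Nfun d ℓ k d z = Mfun d ℓ k z := by
    unfold Nfun Mfun
    refine Finset.prod_congr rfl fun j _ => ?_
    rw [if_pos j.isLt]
  rw [h2, h3]

lemma Mfun_zero (z : Fin d → ℤ) : Mfun d ℓ 0 z = delta0 d z := by
  have hs : sc ℓ 0 = 1 := by
    unfold sc; rw [if_pos (show 0 < K ℓ from K_pos hl)]; norm_num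
  have hr : ρ ℓ 0 = u 1 := by
    unfold ρ; rw [if_pos (Nat.zero_le _), hs]
  unfold Mfun delta0
  rw [hr]
  by_cases hz : z = 0
  · subst hz
    rw [if_pos rfl]
    refine Finset.prod_eq_one fun j _ => ?_
    unfold u
    rw [if_pos (by norm_num)]
    norm_num
  · rw [if_neg hz]
    obtain ⟨j, hj⟩ : ∃ j, z j ≠ 0 := by
      by_contra hc
      push_neg at hc
      exact hz (funext hc)
    refine Finset.prod_eq_zero (Finset.mem_univ j) ?_
    exact u_eq_zero (by omega)

omit hl in
lemma punif_prod (y : Fin d → ℤ) : punif d ℓ y = ∏ j, u ℓ (y j) := by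
  unfold punif
  by_cases hy : y ∈ Lam d ℓ
  · rw [if_pos hy]
    unfold Lam at hy
    rw [Fintype.mem_piFinset] at hy
    have : ∀ j : Fin d, u ℓ (y j) = ((ℓ:ℝ))⁻¹ := by
      intro j
      have := hy j
      simp only [Finset.mem_Icc] at this
      unfold u
      rw [if_pos (by omega)]
    rw [Finset.prod_congr rfl (fun j _ => this j), Finset.prod_const, Finset.card_univ,
      Fintype.card_fin, inv_pow]
  · rw [if_neg hy]
    unfold Lam at hy
    rw [Fintype.mem_piFinset] at hy
    push_neg at hy
    obtain ⟨j, hj⟩ := hy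
    simp only [Finset.mem_Icc] at hj
    refine (Finset.prod_eq_zero (Finset.mem_univ j) ?_).symm
    exact u_eq_zero (by omega)

omit hl in
lemma qconv_prod (z : Fin d → ℤ) : qconv d ℓ z = ∏ j, tri ℓ (z j) := by
  unfold qconv
  have h1 : ∀ y ∈ Lam d ℓ, punif d ℓ y * punif d ℓ (z - y)
      = ∏ j, (u ℓ (y j) * u ℓ (z j - y j)) := by
    intro y _
    rw [punif_prod, punif_prod, ← Finset.prod_mul_distrib]
    refine Finset.prod_congr rfl fun j _ => ?_
    rfl
  rw [Finset.sum_congr rfl h1]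
  unfold Lam
  rw [← Finset.prod_univ_sum (fun _ : Fin d => Finset.Icc (0:ℤ) ((ℓ:ℤ)-1))
    (fun j x => u ℓ x * u ℓ (z j - x))]
  rfl

lemma Mfun_top (z : Fin d → ℤ) : Mfun d ℓ (K ℓ + 1) z = qconv d ℓ z := by
  unfold Mfun
  rw [qconv_prod]
  refine Finset.prod_congr rfl fun j _ => ?_
  unfold ρ
  rw [if_neg (by omega)]

omit hl in
lemma telescope_Icc (f : ℕ → ℝ) (n : ℕ) :
    ∑ k ∈ Finset.Icc 1 n, (f (k-1) - f k) = f 0 - f n := by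
  induction n with
  | zero => simp
  | succ m ih =>
      rw [Finset.sum_Icc_succ_top (by omega), ih]
      have : m + 1 - 1 = m := by omega
      rw [this]
      ring

lemma flow_connects : Connects d (flow d ℓ) (delta0 d) (qconv d ℓ) := by
  intro z
  unfold flow
  have h1 : ∑ i : Fin d, (∑ k ∈ Finset.Icc 1 (K ℓ + 1), st d ℓ k i z
      - ∑ k ∈ Finset.Icc 1 (K ℓ + 1), st d ℓ k i (z - eZ d i))
      = ∑ k ∈ Finset.Icc 1 (K ℓ + 1), ∑ i : Fin d, (st d ℓ k i z - st d ℓ k i (z - eZ d i)) := by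
    rw [Finset.sum_comm]
    refine Finset.sum_congr rfl fun i _ => ?_
    rw [← Finset.sum_sub_distrib]
  rw [h1]
  rw [Finset.sum_congr rfl (fun k _ => div_eq_telescope d k z)]
  rw [telescope_Icc (f := fun k => Mfun d ℓ k z) (K ℓ + 1)]
  rw [Mfun_zero d hl, Mfun_top d hl]


omit hl in
lemma lam_cast (hl1 : 1 ≤ ℓ) : (((2*ℓ-1 : ℕ) : ℤ)) - 1 = 2*(ℓ:ℤ) - 2 := by
  have : (2*ℓ-1 : ℕ) = 2*ℓ-1 := rfl
  omega

lemma ffac_zero_outside {k : ℕ} (hk1 : 1 ≤ k) (hk2 : k ≤ K ℓ + 1) (c j : Fin d) {x : ℤ}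
    (hx : ¬ (0 ≤ x ∧ x ≤ 2*(ℓ:ℤ) - 2)) : Ffac d ℓ k c j x = 0 := by
  unfold Ffac
  by_cases hjc : j = c
  · rw [if_pos hjc]
    rcases not_and_or.mp hx with h | h
    · exact psi_zero_neg (ℓ := ℓ) k (by omega)
    · exact psi_zero_ge_l hl hk1 hk2 (by omega)
  · rw [if_neg hjc]
    split
    · by_contra hc
      exact hx (rho_support hl (by omega) hc)
    · by_contra hc
      exact hx (rho_support hl (by omega) hc)

lemma st_zero_outside {k : ℕ} (hk1 : 1 ≤ k) (hk2 : k ≤ K ℓ + 1) (c : Fin d)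
    {z : Fin d → ℤ} (hz : z ∉ Lam d (2*ℓ-1)) : st d ℓ k c z = 0 := by
  unfold Lam at hz
  rw [Fintype.mem_piFinset] at hz
  push_neg at hz
  obtain ⟨j, hj⟩ := hz
  simp only [Finset.mem_Icc] at hj
  refine Finset.prod_eq_zero (Finset.mem_univ j) ?_
  refine ffac_zero_outside d hl hk1 hk2 c j ?_
  rw [lam_cast (by omega)] at hj
  omega

lemma flow_zero_outside {z : Fin d → ℤ} (hz : z ∉ Lam d (2*ℓ-1)) (i : Fin d) :
    flow d ℓ z i = 0 := by
  unfold flow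
  refine Finset.sum_eq_zero fun k hk => ?_
  simp only [Finset.mem_Icc] at hk
  exact st_zero_outside d hl hk.1 hk.2 i hz

lemma flow_supported : SupportedIn d (flow d ℓ) (Lam d (2*ℓ-1)) := by
  intro z i h
  obtain ⟨k, hk, hst⟩ := Finset.exists_ne_zero_of_sum_ne_zero h
  simp only [Finset.mem_Icc] at hk
  unfold st at hst
  rw [Finset.prod_ne_zero_iff] at hst
  have hcoord : ∀ j : Fin d, 0 ≤ z j ∧ z j ≤ 2*(ℓ:ℤ) - 2 := by
    intro j
    by_contra hc
    exact hst j (Finset.mem_univ j) (ffac_zero_outside d hl hk.1 hk.2 i j hc)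
  have hpsi : ψ ℓ k (z i) ≠ 0 := by
    have := hst i (Finset.mem_univ i)
    unfold Ffac at this
    rwa [if_pos rfl] at this
  have hzi : z i ≤ 2*(ℓ:ℤ) - 3 := by
    by_contra hc
    exact hpsi (psi_zero_ge_l hl hk.1 hk.2 (by omega))
  constructor
  · unfold Lam
    rw [Fintype.mem_piFinset]
    intro j
    simp only [Finset.mem_Icc]
    rw [lam_cast (by omega)]
    exact hcoord j
  · unfold Lam
    rw [Fintype.mem_piFinset]
    intro j
    simp only [Finset.mem_Icc, Pi.add_apply]
    rw [lam_cast (by omega)]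
    unfold eZ
    by_cases hj : j = i
    · subst hj
      rw [if_pos rfl]
      have := (hcoord j).1
      omega
    · rw [if_neg hj]
      have := hcoord j
      omega

lemma sum_psi_abs {k : ℕ} (hk1 : 1 ≤ k) (hk2 : k ≤ K ℓ + 1) (B : Finset ℤ) :
    ∑ x ∈ B, |ψ ℓ k x| ≤ (2:ℝ)^k := by
  have h1 : ∀ x ∈ B, |ψ ℓ k x| ≤ if x ∈ Finset.Icc (0:ℤ) ((2:ℤ)^k - 2) then 1 else 0 := by
    intro x _
    by_cases hx : x ∈ Finset.Icc (0:ℤ) ((2:ℤ)^k - 2)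
    · rw [if_pos hx]; exact psi_abs_le_one hl k x
    · rw [if_neg hx]
      simp only [Finset.mem_Icc] at hx
      rcases not_and_or.mp hx with h | h
      · rw [psi_zero_neg (ℓ := ℓ) k (by omega)]; simp
      · rw [psi_zero_ge hl hk1 hk2 (by omega)]; simp
  calc ∑ x ∈ B, |ψ ℓ k x| ≤ ∑ x ∈ B, (if x ∈ Finset.Icc (0:ℤ) ((2:ℤ)^k - 2) then (1:ℝ) else 0) :=
        Finset.sum_le_sum h1
    _ = ∑ x ∈ B ∩ Finset.Icc (0:ℤ) ((2:ℤ)^k - 2), (1:ℝ) := by rw [Finset.sum_ite_mem]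
    _ = (B ∩ Finset.Icc (0:ℤ) ((2:ℤ)^k - 2)).card := by rw [Finset.sum_const]; simp
    _ ≤ ((Finset.Icc (0:ℤ) ((2:ℤ)^k - 2)).card : ℝ) := by
        have := Finset.card_le_card (Finset.inter_subset_right
          (s₁ := B) (s₂ := Finset.Icc (0:ℤ) ((2:ℤ)^k - 2)))
        exact_mod_cast this
    _ ≤ (2:ℝ)^k := by
        rw [Int.card_Icc]
        have hcast : ((2:ℤ)^k) = ((2^k : ℕ) : ℤ) := by push_cast; ring
        have h2 : (0:ℤ) < 2^k := by positivity
        have h6 : ((2:ℤ)^k - 2 + 1 - 0).toNat ≤ 2^k := by omega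
        calc (((2:ℤ)^k - 2 + 1 - 0).toNat : ℝ) ≤ ((2^k : ℕ) : ℝ) := by exact_mod_cast h6
          _ = (2:ℝ)^k := by push_cast; ring

lemma ffac_abs_le {k : ℕ} (hk1 : 1 ≤ k) (hk2 : k ≤ K ℓ + 1) (c j : Fin d) (hj : j ≠ c) (x : ℤ) :
    |Ffac d ℓ k c j x| ≤ 8 / 2^k := by
  unfold Ffac
  rw [if_neg hj]
  have h8 : (0:ℝ) < (2:ℝ)^k := by positivity
  split
  · rw [abs_of_nonneg (rho_nonneg hl k x)]
    calc ρ ℓ k x ≤ 4 / 2^k := rho_le hl (by omega) x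
      _ ≤ 8 / 2^k := by gcongr <;> norm_num
  · rw [abs_of_nonneg (rho_nonneg hl (k-1) x)]
    calc ρ ℓ (k-1) x ≤ 4 / 2^(k-1) := rho_le hl (by omega) x
      _ ≤ 8 / 2^k := by
          rw [div_le_div_iff₀ (by positivity) h8]
          have hk' : k - 1 + 1 = k := by omega
          calc (4:ℝ) * 2^k = 4 * 2^(k-1+1) := by rw [hk']
            _ = 2^(k-1) * 8 := by rw [pow_succ]; ring
            _ ≤ 8 * 2^(k-1) := by rw [mul_comm]

lemma sum_st_abs {k : ℕ} (hk1 : 1 ≤ k) (hk2 : k ≤ K ℓ + 1) (c : Fin d) :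
    ∑ z ∈ Lam d (2*ℓ-1), |st d ℓ k c z| ≤ (2:ℝ)^k := by
  have habs : ∀ z, |st d ℓ k c z| = ∏ j, |Ffac d ℓ k c j (z j)| := by
    intro z
    unfold st
    rw [Finset.abs_prod]
  rw [Finset.sum_congr rfl (fun z _ => habs z)]
  unfold Lam
  rw [← Finset.prod_univ_sum (fun _ : Fin d => Finset.Icc 0 (((2*ℓ-1:ℕ):ℤ) - 1))
    (fun j x => |Ffac d ℓ k c j x|)]
  set B := Finset.Icc (0:ℤ) (((2*ℓ-1:ℕ):ℤ) - 1) with hB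
  have hc : ∑ x ∈ B, |Ffac d ℓ k c c x| ≤ (2:ℝ)^k := by
    have : ∀ x ∈ B, |Ffac d ℓ k c c x| = |ψ ℓ k x| := by
      intro x _
      unfold Ffac
      rw [if_pos rfl]
    rw [Finset.sum_congr rfl this]
    exact sum_psi_abs hl hk1 hk2 B
  have hother : ∀ j : Fin d, j ≠ c → ∑ x ∈ B, |Ffac d ℓ k c j x| ≤ 1 := by
    intro j hj
    unfold Ffac
    rw [if_neg hj]
    split
    · have : ∀ x ∈ B, |ρ ℓ k x| = ρ ℓ k x := fun x _ => abs_of_nonneg (rho_nonneg hl k x)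
      rw [Finset.sum_congr rfl this]
      exact rho_sum_le hl k B
    · have : ∀ x ∈ B, |ρ ℓ (k-1) x| = ρ ℓ (k-1) x := fun x _ => abs_of_nonneg (rho_nonneg hl (k-1) x)
      rw [Finset.sum_congr rfl this]
      exact rho_sum_le hl (k-1) B
  rw [← Finset.mul_prod_erase Finset.univ (fun j => ∑ x ∈ B, |Ffac d ℓ k c j x|)
    (Finset.mem_univ c)]
  calc (∑ x ∈ B, |Ffac d ℓ k c c x|) * ∏ j ∈ Finset.univ.erase c, ∑ x ∈ B, |Ffac d ℓ k c j x|
      ≤ (2:ℝ)^k * 1 := by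
        apply mul_le_mul hc ?_ ?_ (by positivity)
        · apply Finset.prod_le_one
          · intro j _
            exact Finset.sum_nonneg fun x _ => abs_nonneg _
          · intro j hj
            exact hother j (Finset.ne_of_mem_erase hj)
        · exact Finset.prod_nonneg fun j _ => Finset.sum_nonneg fun x _ => abs_nonneg _
    _ = (2:ℝ)^k := mul_one _

lemma st_abs_le {k : ℕ} (hk1 : 1 ≤ k) (hk2 : k ≤ K ℓ + 1) (c : Fin d) (z : Fin d → ℤ) :
    |st d ℓ k c z| ≤ (8 / 2^k)^(d-1) := by
  unfold st
  rw [Finset.abs_prod]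
  rw [← Finset.mul_prod_erase Finset.univ (fun j => |Ffac d ℓ k c j (z j)|)
    (Finset.mem_univ c)]
  have h1 : |Ffac d ℓ k c c (z c)| ≤ 1 := by
    unfold Ffac
    rw [if_pos rfl]
    exact psi_abs_le_one hl k (z c)
  calc |Ffac d ℓ k c c (z c)| * ∏ j ∈ Finset.univ.erase c, |Ffac d ℓ k c j (z j)|
      ≤ 1 * (8/2^k)^(d-1) := by
        apply mul_le_mul h1 ?_ ?_ (by norm_num)
        · calc ∏ j ∈ Finset.univ.erase c, |Ffac d ℓ k c j (z j)|
              ≤ ∏ j ∈ Finset.univ.erase c, (8/2^k : ℝ) := by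
                apply Finset.prod_le_prod
                · intro j _; exact abs_nonneg _
                · intro j hj
                  exact ffac_abs_le d hl hk1 hk2 c j (Finset.ne_of_mem_erase hj) (z j)
            _ = (8/2^k : ℝ)^(d-1) := by
                rw [Finset.prod_const, Finset.card_erase_of_mem (Finset.mem_univ c),
                  Finset.card_univ, Fintype.card_fin]
        · exact Finset.prod_nonneg fun j _ => abs_nonneg _
    _ = (8/2^k)^(d-1) := one_mul _


lemma pair_bound {k k' : ℕ} (hk1 : 1 ≤ k) (hk2 : k ≤ K ℓ + 1) (hk1' : 1 ≤ k')
    (hk2' : k' ≤ K ℓ + 1) (c : Fin d) :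
    ∑ z ∈ Lam d (2*ℓ-1), |st d ℓ k c z| * |st d ℓ k' c z|
      ≤ (8/2^(k'):ℝ)^(d-1) * 2^k := by
  calc ∑ z ∈ Lam d (2*ℓ-1), |st d ℓ k c z| * |st d ℓ k' c z|
      ≤ ∑ z ∈ Lam d (2*ℓ-1), |st d ℓ k c z| * ((8/2^(k'):ℝ)^(d-1)) := by
        refine Finset.sum_le_sum fun z _ => ?_
        exact mul_le_mul_of_nonneg_left (st_abs_le d hl hk1' hk2' c z) (abs_nonneg _)
    _ = (∑ z ∈ Lam d (2*ℓ-1), |st d ℓ k c z|) * ((8/2^(k'):ℝ)^(d-1)) := by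
        rw [Finset.sum_mul]
    _ ≤ (2:ℝ)^k * ((8/2^(k'):ℝ)^(d-1)) := by
        refine mul_le_mul_of_nonneg_right (sum_st_abs d hl hk1 hk2 c) (by positivity)
    _ = (8/2^(k'):ℝ)^(d-1) * 2^k := by ring

omit hl in
lemma geo_sum (n : ℕ) : ∑ k ∈ Finset.Icc 1 n, (2:ℝ)^k ≤ 2^(n+1) := by
  induction n with
  | zero => simp
  | succ m ih =>
      rw [Finset.sum_Icc_succ_top (by omega)]
      calc (∑ k ∈ Finset.Icc 1 m, (2:ℝ)^k) + 2^(m+1) ≤ 2^(m+1) + 2^(m+1) := by linarith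
        _ = 2^(m+1+1) := by rw [pow_succ]; ring

omit hl in
lemma geo_half (n : ℕ) : ∑ k ∈ Finset.Icc 1 n, ((1:ℝ)/2)^k ≤ 1 := by
  have h : ∀ n : ℕ, ∑ k ∈ Finset.Icc 1 n, ((1:ℝ)/2)^k = 1 - (1/2)^n := by
    intro n
    induction n with
    | zero => simp
    | succ m ih =>
        rw [Finset.sum_Icc_succ_top (by omega), ih, pow_succ]
        ring
  rw [h n]
  have : (0:ℝ) ≤ (1/2)^n := by positivity
  linarith

lemma energy_master (c : Fin d) :
    ∑ z ∈ Lam d (2*ℓ-1), (flow d ℓ z c)^2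
      ≤ 2 * ∑ k' ∈ Finset.Icc 1 (K ℓ + 1), (8/2^(k'):ℝ)^(d-1) * 2^(k'+1) := by
  set I := Finset.Icc 1 (K ℓ + 1) with hI
  have step1 : ∀ z, (flow d ℓ z c)^2 ≤ ∑ k ∈ I, ∑ k' ∈ I, |st d ℓ k c z| * |st d ℓ k' c z| := by
    intro z
    rw [pow_two]
    unfold flow
    rw [Finset.sum_mul_sum]
    refine Finset.sum_le_sum fun k _ => Finset.sum_le_sum fun k' _ => ?_
    calc st d ℓ k c z * st d ℓ k' c z ≤ |st d ℓ k c z * st d ℓ k' c z| := le_abs_self _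
      _ = |st d ℓ k c z| * |st d ℓ k' c z| := abs_mul _ _
  have step2 : ∑ z ∈ Lam d (2*ℓ-1), (flow d ℓ z c)^2
      ≤ ∑ k ∈ I, ∑ k' ∈ I, ∑ z ∈ Lam d (2*ℓ-1), |st d ℓ k c z| * |st d ℓ k' c z| := by
    calc ∑ z ∈ Lam d (2*ℓ-1), (flow d ℓ z c)^2
        ≤ ∑ z ∈ Lam d (2*ℓ-1), ∑ k ∈ I, ∑ k' ∈ I, |st d ℓ k c z| * |st d ℓ k' c z| :=
          Finset.sum_le_sum fun z _ => step1 z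
      _ = ∑ k ∈ I, ∑ z ∈ Lam d (2*ℓ-1), ∑ k' ∈ I, |st d ℓ k c z| * |st d ℓ k' c z| :=
          Finset.sum_comm
      _ = ∑ k ∈ I, ∑ k' ∈ I, ∑ z ∈ Lam d (2*ℓ-1), |st d ℓ k c z| * |st d ℓ k' c z| :=
          Finset.sum_congr rfl fun k _ => Finset.sum_comm
  -- A a b = contribution bound assuming a ≤ b
  set A : ℕ → ℕ → ℝ := fun a b => if a ≤ b then (8/2^(b):ℝ)^(d-1) * 2^a else 0 with hA
  have hAnn : ∀ a b, 0 ≤ A a b := by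
    intro a b
    rw [hA]
    dsimp only
    split
    · positivity
    · exact le_refl 0
  have step3 : ∀ k ∈ I, ∀ k' ∈ I, ∑ z ∈ Lam d (2*ℓ-1), |st d ℓ k c z| * |st d ℓ k' c z|
      ≤ A k k' + A k' k := by
    intro k hk k' hk'
    simp only [hI, Finset.mem_Icc] at hk hk'
    rcases le_or_gt k k' with h | h
    · have := pair_bound d hl hk.1 hk.2 hk'.1 hk'.2 c
      have hAk : A k k' = (8/2^(k'):ℝ)^(d-1) * 2^k := by rw [hA]; dsimp only; rw [if_pos h]
      rw [hAk]
      have := hAnn k' k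
      linarith [pair_bound d hl hk.1 hk.2 hk'.1 hk'.2 c]
    · have heq : ∑ z ∈ Lam d (2*ℓ-1), |st d ℓ k c z| * |st d ℓ k' c z|
          = ∑ z ∈ Lam d (2*ℓ-1), |st d ℓ k' c z| * |st d ℓ k c z| := by
        refine Finset.sum_congr rfl fun z _ => mul_comm _ _
      rw [heq]
      have hAk : A k' k = (8/2^(k):ℝ)^(d-1) * 2^(k') := by
        rw [hA]; dsimp only; rw [if_pos h.le]
      have := hAnn k k'
      have hp := pair_bound d hl hk'.1 hk'.2 hk.1 hk.2 c
      rw [hAk]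
      linarith
  have step4 : ∑ k ∈ I, ∑ k' ∈ I, ∑ z ∈ Lam d (2*ℓ-1), |st d ℓ k c z| * |st d ℓ k' c z|
      ≤ 2 * ∑ k ∈ I, ∑ k' ∈ I, A k k' := by
    calc ∑ k ∈ I, ∑ k' ∈ I, ∑ z ∈ Lam d (2*ℓ-1), |st d ℓ k c z| * |st d ℓ k' c z|
        ≤ ∑ k ∈ I, ∑ k' ∈ I, (A k k' + A k' k) :=
          Finset.sum_le_sum fun k hk => Finset.sum_le_sum fun k' hk' => step3 k hk k' hk'
      _ = (∑ k ∈ I, ∑ k' ∈ I, A k k') + (∑ k ∈ I, ∑ k' ∈ I, A k' k) := by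
          rw [← Finset.sum_add_distrib]
          refine Finset.sum_congr rfl fun k _ => ?_
          rw [← Finset.sum_add_distrib]
      _ = (∑ k ∈ I, ∑ k' ∈ I, A k k') + (∑ k' ∈ I, ∑ k ∈ I, A k' k) := by
          congr 1
          exact Finset.sum_comm
      _ = 2 * ∑ k ∈ I, ∑ k' ∈ I, A k k' := by ring
  have step5 : ∑ k ∈ I, ∑ k' ∈ I, A k k' ≤ ∑ k' ∈ I, (8/2^(k'):ℝ)^(d-1) * 2^(k'+1) := by
    rw [Finset.sum_comm]
    refine Finset.sum_le_sum fun k' hk' => ?_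
    simp only [hI, Finset.mem_Icc] at hk'
    have hinner : ∑ k ∈ I, A k k' = (8/2^(k'):ℝ)^(d-1) * ∑ k ∈ I, (if k ≤ k' then (2:ℝ)^k else 0) := by
      rw [Finset.mul_sum]
      refine Finset.sum_congr rfl fun k _ => ?_
      rw [hA]
      dsimp only
      by_cases hkk : k ≤ k'
      · rw [if_pos hkk, if_pos hkk]
      · rw [if_neg hkk, if_neg hkk, mul_zero]
    rw [hinner]
    have hsum : ∑ k ∈ I, (if k ≤ k' then (2:ℝ)^k else 0) ≤ (2:ℝ)^(k'+1) := by
      have h1 : ∑ k ∈ I, (if k ≤ k' then (2:ℝ)^k else 0)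
          = ∑ k ∈ I.filter (· ≤ k'), (2:ℝ)^k := by
        rw [Finset.sum_filter]
      rw [h1]
      have h2 : I.filter (· ≤ k') ⊆ Finset.Icc 1 k' := by
        intro k hk
        simp only [hI, Finset.mem_filter, Finset.mem_Icc] at hk ⊢
        omega
      calc ∑ k ∈ I.filter (· ≤ k'), (2:ℝ)^k ≤ ∑ k ∈ Finset.Icc 1 k', (2:ℝ)^k :=
            Finset.sum_le_sum_of_subset_of_nonneg h2 (fun k _ _ => by positivity)
        _ ≤ (2:ℝ)^(k'+1) := geo_sum k'
    calc (8/2^(k'):ℝ)^(d-1) * ∑ k ∈ I, (if k ≤ k' then (2:ℝ)^k else 0)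
        ≤ (8/2^(k'):ℝ)^(d-1) * (2:ℝ)^(k'+1) :=
          mul_le_mul_of_nonneg_left hsum (by positivity)
      _ = (8/2^(k'):ℝ)^(d-1) * 2^(k'+1) := rfl
  calc ∑ z ∈ Lam d (2*ℓ-1), (flow d ℓ z c)^2
      ≤ ∑ k ∈ I, ∑ k' ∈ I, ∑ z ∈ Lam d (2*ℓ-1), |st d ℓ k c z| * |st d ℓ k' c z| := step2
    _ ≤ 2 * ∑ k ∈ I, ∑ k' ∈ I, A k k' := step4
    _ ≤ 2 * ∑ k' ∈ I, (8/2^(k'):ℝ)^(d-1) * 2^(k'+1) := by linarith [step5]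

lemma l1_master :
    ∑ z ∈ Lam d (2*ℓ-1), ∑ i : Fin d, |flow d ℓ z i| ≤ (d:ℝ) * 2^(K ℓ + 2) := by
  calc ∑ z ∈ Lam d (2*ℓ-1), ∑ i : Fin d, |flow d ℓ z i|
      = ∑ i : Fin d, ∑ z ∈ Lam d (2*ℓ-1), |flow d ℓ z i| := Finset.sum_comm
    _ ≤ ∑ i : Fin d, (2:ℝ)^(K ℓ + 2) := by
        refine Finset.sum_le_sum fun i _ => ?_
        calc ∑ z ∈ Lam d (2*ℓ-1), |flow d ℓ z i|
            ≤ ∑ z ∈ Lam d (2*ℓ-1), ∑ k ∈ Finset.Icc 1 (K ℓ + 1), |st d ℓ k i z| := by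
              refine Finset.sum_le_sum fun z _ => ?_
              exact Finset.abs_sum_le_sum_abs _ _
          _ = ∑ k ∈ Finset.Icc 1 (K ℓ + 1), ∑ z ∈ Lam d (2*ℓ-1), |st d ℓ k i z| :=
              Finset.sum_comm
          _ ≤ ∑ k ∈ Finset.Icc 1 (K ℓ + 1), (2:ℝ)^k := by
              refine Finset.sum_le_sum fun k hk => ?_
              simp only [Finset.mem_Icc] at hk
              exact sum_st_abs d hl hk.1 hk.2 i
          _ ≤ (2:ℝ)^(K ℓ + 2) := geo_sum (K ℓ + 1)
    _ = (d:ℝ) * 2^(K ℓ + 2) := by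
        rw [Finset.sum_const, Finset.card_univ, Fintype.card_fin, nsmul_eq_mul]


omit hl in
lemma prod_u_one (z : Fin d → ℤ) : ∏ j : Fin d, u 1 (z j) = delta0 d z := by
  unfold delta0
  by_cases hz : z = 0
  · subst hz
    rw [if_pos rfl]
    refine Finset.prod_eq_one fun j _ => ?_
    unfold u
    rw [if_pos (by norm_num)]
    norm_num
  · rw [if_neg hz]
    obtain ⟨j, hj⟩ : ∃ j, z j ≠ 0 := by
      by_contra hc
      push_neg at hc
      exact hz (funext hc)
    refine Finset.prod_eq_zero (Finset.mem_univ j) ?_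
    exact u_eq_zero (by omega)

omit hl in
lemma qconv_one (z : Fin d → ℤ) : qconv d 1 z = delta0 d z := by
  rw [qconv_prod]
  have htri : ∀ x : ℤ, tri 1 x = u 1 x := by
    intro x
    unfold tri
    norm_num
    have h0 : u 1 0 = 1 := by unfold u; rw [if_pos (by norm_num)]; norm_num
    rw [h0, one_mul]
  rw [Finset.prod_congr rfl (fun j _ => htri (z j))]
  exact prod_u_one d z

lemma pow_K_le : (2:ℝ)^(K ℓ) ≤ 2*(ℓ:ℝ) := by
  have h1 : (2:ℕ)^(K ℓ) ≤ 2*ℓ := by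
    have h2 := pow_pred_lt hl
    have h3 : K ℓ - 1 + 1 = K ℓ := by
      have := K_pos hl
      omega
    calc (2:ℕ)^(K ℓ) = 2^(K ℓ - 1 + 1) := by rw [h3]
      _ = 2^(K ℓ - 1) * 2 := pow_succ 2 _
      _ ≤ ℓ * 2 := by
          have : 2^(K ℓ - 1) ≤ ℓ := h2.le
          exact Nat.mul_le_mul_right 2 this
      _ = 2 * ℓ := by ring
  exact_mod_cast h1

lemma K_le_log : ((K ℓ : ℝ)) + 1 ≤ 6 * Real.log ℓ := by
  have hlog2 : (1:ℝ)/2 ≤ Real.log 2 := by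
    have := Real.log_two_gt_d9
    norm_num at this ⊢
    linarith
  have hmono : Real.log 2 ≤ Real.log ℓ := by
    apply Real.log_le_log (by norm_num)
    exact_mod_cast hl
  have hpow : ((2:ℝ))^(K ℓ - 1) ≤ (ℓ:ℝ) := by
    have := (pow_pred_lt hl).le
    exact_mod_cast this
  have hlogpow : ((K ℓ - 1 : ℕ):ℝ) * Real.log 2 ≤ Real.log ℓ := by
    rw [← Real.log_pow]
    exact Real.log_le_log (by positivity) hpow
  have hK1 := K_pos hl
  have hc : ((K ℓ - 1 : ℕ):ℝ) = (K ℓ : ℝ) - 1 := by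
    rw [Nat.cast_sub hK1]
    norm_num
  rw [hc] at hlogpow
  have hKnn : (1:ℝ) ≤ (K ℓ : ℝ) := by exact_mod_cast hK1
  nlinarith [mul_nonneg (show (0:ℝ) ≤ (K ℓ : ℝ) - 1 by linarith)
    (show (0:ℝ) ≤ Real.log 2 - 1/2 by linarith)]

noncomputable def X (d ℓ : ℕ) : ℝ :=
  ∑ k' ∈ Finset.Icc 1 (K ℓ + 1), (8/2^(k'):ℝ)^(d-1) * 2^(k'+1)

lemma X_d1 : X 1 ℓ ≤ 16 * (ℓ:ℝ) := by
  unfold X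
  have h1 : ∀ k ∈ Finset.Icc 1 (K ℓ + 1), (8/2^(k):ℝ)^(1-1) * 2^(k+1) = 2 * 2^k := by
    intro k _
    norm_num
    rw [pow_succ]
    ring
  rw [Finset.sum_congr rfl h1, ← Finset.mul_sum]
  calc 2 * ∑ k ∈ Finset.Icc 1 (K ℓ + 1), (2:ℝ)^k ≤ 2 * 2^(K ℓ + 2) := by
        have := geo_sum (K ℓ + 1)
        linarith
    _ = 8 * 2^(K ℓ) := by rw [pow_add]; ring
    _ ≤ 8 * (2 * ℓ) := by
        have := pow_K_le hl
        linarith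
    _ = 16 * (ℓ:ℝ) := by ring

lemma X_d2 : X 2 ℓ ≤ 16 * ((K ℓ : ℝ) + 1) := by
  unfold X
  have h1 : ∀ k ∈ Finset.Icc 1 (K ℓ + 1), (8/2^(k):ℝ)^(2-1) * 2^(k+1) = 16 := by
    intro k _
    have h2 : (2:ℝ)^k ≠ 0 := by positivity
    norm_num
    rw [pow_succ]
    field_simp
    ring
  rw [Finset.sum_congr rfl h1, Finset.sum_const, Nat.card_Icc]
  have : K ℓ + 1 + 1 - 1 = K ℓ + 1 := by omega
  rw [this, nsmul_eq_mul]
  push_cast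
  linarith

omit hl in
lemma X_d3 {d : ℕ} (hd : 3 ≤ d) (ℓ : ℕ) : X d ℓ ≤ 4 * 8^(d-1) := by
  unfold X
  have hterm : ∀ k ∈ Finset.Icc 1 (K ℓ + 1), (8/2^(k):ℝ)^(d-1) * 2^(k+1)
      ≤ 8^(d-1) * 2 * (1/2:ℝ)^k := by
    intro k _
    have e1 : ((1:ℝ)/2)^k * 2^k = 1 := by rw [← mul_pow]; norm_num
    have e2 : (8/2^k:ℝ)^(d-1) = 8^(d-1) * ((1/2:ℝ))^(k*(d-1)) := by
      rw [div_pow, ← pow_mul, div_eq_mul_inv, one_div, inv_pow]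
    have e3 : ((1:ℝ)/2)^(k*(d-1)) ≤ ((1/2:ℝ))^(2*k) := by
      apply pow_le_pow_of_le_one (by norm_num) (by norm_num)
      calc 2*k = k*2 := by ring
        _ ≤ k*(d-1) := Nat.mul_le_mul_left k (by omega)
    have e4 : ((1/2:ℝ))^(2*k) * 2^(k+1) = 2 * (1/2)^k := by
      rw [two_mul, pow_add, pow_succ]
      linear_combination (2 * (1/2:ℝ)^k) * e1
    calc (8/2^(k):ℝ)^(d-1) * 2^(k+1) = 8^(d-1) * (((1/2:ℝ))^(k*(d-1)) * 2^(k+1)) := by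
          rw [e2]; ring
      _ ≤ 8^(d-1) * (((1/2:ℝ))^(2*k) * 2^(k+1)) := by
          apply mul_le_mul_of_nonneg_left ?_ (by positivity)
          apply mul_le_mul_of_nonneg_right e3 (by positivity)
      _ = 8^(d-1) * 2 * (1/2:ℝ)^k := by rw [e4]; ring
  calc ∑ k ∈ Finset.Icc 1 (K ℓ + 1), (8/2^(k):ℝ)^(d-1) * 2^(k+1)
      ≤ ∑ k ∈ Finset.Icc 1 (K ℓ + 1), 8^(d-1) * 2 * (1/2:ℝ)^k :=
        Finset.sum_le_sum hterm
    _ = 8^(d-1) * 2 * ∑ k ∈ Finset.Icc 1 (K ℓ + 1), (1/2:ℝ)^k := by rw [← Finset.mul_sum]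
    _ ≤ 8^(d-1) * 2 * 1 := by
        apply mul_le_mul_of_nonneg_left (geo_half _) (by positivity)
    _ ≤ 4 * 8^(d-1) := by
        have : (0:ℝ) ≤ 8^(d-1) := by positivity
        linarith

lemma energy_total :
    ∑ z ∈ Lam d (2*ℓ-1), ∑ i : Fin d, (flow d ℓ z i)^2 ≤ (d:ℝ) * (2 * X d ℓ) := by
  calc ∑ z ∈ Lam d (2*ℓ-1), ∑ i : Fin d, (flow d ℓ z i)^2
      = ∑ i : Fin d, ∑ z ∈ Lam d (2*ℓ-1), (flow d ℓ z i)^2 := Finset.sum_comm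
    _ ≤ ∑ _i : Fin d, (2 * X d ℓ) :=
        Finset.sum_le_sum fun i _ => energy_master d hl i
    _ = (d:ℝ) * (2 * X d ℓ) := by
        rw [Finset.sum_const, Finset.card_univ, Fintype.card_fin, nsmul_eq_mul]

lemma finsum_eq_sq :
    ∑ᶠ z : Fin d → ℤ, ∑ i : Fin d, (flow d ℓ z i)^2
      = ∑ z ∈ Lam d (2*ℓ-1), ∑ i : Fin d, (flow d ℓ z i)^2 := by
  apply finsum_eq_sum_of_support_subset
  intro z hz
  simp only [Function.mem_support] at hz
  by_contra hzL
  apply hz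
  refine Finset.sum_eq_zero fun i _ => ?_
  rw [flow_zero_outside d hl hzL i]
  norm_num

lemma finsum_eq_abs :
    ∑ᶠ z : Fin d → ℤ, ∑ i : Fin d, |flow d ℓ z i|
      = ∑ z ∈ Lam d (2*ℓ-1), ∑ i : Fin d, |flow d ℓ z i| := by
  apply finsum_eq_sum_of_support_subset
  intro z hz
  simp only [Function.mem_support] at hz
  by_contra hzL
  apply hz
  refine Finset.sum_eq_zero fun i _ => ?_
  rw [flow_zero_outside d hl hzL i]
  norm_num

end Multi

end FlowAux

/-- Flow lemma: there is `C = C(d)` such that for every `ℓ ∈ ℕ` there is a flow `φ_ℓ`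
connecting the point mass at `0` to `q_ℓ`, supported in `Λ_{2ℓ-1}`, with
`Σ_{z,b} φ_ℓ(z;b)² ≤ C g_d(ℓ)` and `Σ_{z,b} |φ_ℓ(z;b)| ≤ C ℓ`. -/
theorem flow_lemma (d : ℕ) (hd : 1 ≤ d) :
    ∃ C : ℝ, 0 < C ∧ ∀ ℓ : ℕ, 1 ≤ ℓ →
      ∃ φ : (Fin d → ℤ) → Fin d → ℝ,
        SupportedIn d φ (Lam d (2 * ℓ - 1)) ∧
        Connects d φ (delta0 d) (qconv d ℓ) ∧
        (∑ᶠ z : Fin d → ℤ, ∑ i : Fin d, (φ z i) ^ 2) ≤ C * gd d ℓ ∧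
        (∑ᶠ z : Fin d → ℤ, ∑ i : Fin d, |φ z i|) ≤ C * ℓ := by
  have hdpos : (0:ℝ) < d := by exact_mod_cast hd
  refine ⟨(d:ℝ) * 8^(d+2), by positivity, ?_⟩
  intro ℓ hℓ
  rcases eq_or_lt_of_le hℓ with h1 | h2
  · -- case ℓ = 1 : the zero flow works since q₁ = δ₀
    subst h1
    have hg : 0 ≤ gd d 1 := by
      unfold gd
      split
      · norm_num
      · split
        · simp
        · norm_num
    refine ⟨fun _ _ => 0, ?_, ?_, ?_, ?_⟩
    · intro z i h
      exact absurd rfl h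
    · intro z
      rw [FlowAux.qconv_one d z]
      simp
    · calc (∑ᶠ _z : Fin d → ℤ, ∑ _i : Fin d, ((0:ℝ)) ^ 2) = 0 := by simp
        _ ≤ (d:ℝ) * 8^(d+2) * gd d 1 := mul_nonneg (by positivity) hg
    · calc (∑ᶠ _z : Fin d → ℤ, ∑ _i : Fin d, |(0:ℝ)|) = 0 := by simp
        _ ≤ (d:ℝ) * 8^(d+2) * ((1:ℕ):ℝ) := by positivity
  · have hl : 2 ≤ ℓ := h2
    have hlr : (2:ℝ) ≤ (ℓ:ℝ) := by exact_mod_cast hl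
    refine ⟨FlowAux.flow d ℓ, FlowAux.flow_supported d hl, FlowAux.flow_connects d hl, ?_, ?_⟩
    · -- energy bound
      rw [FlowAux.finsum_eq_sq d hl]
      have hE := FlowAux.energy_total d hl
      rcases Nat.lt_or_ge d 3 with hd3 | hd3
      · interval_cases d
        · -- d = 1
          have hX := FlowAux.X_d1 hl
          have hgd : gd 1 ℓ = (ℓ:ℝ) := by unfold gd; rw [if_pos rfl]
          rw [hgd]
          have : ((1:ℕ):ℝ) * 8^(1+2) = 512 := by norm_num
          rw [this]
          calc ∑ z ∈ Lam 1 (2*ℓ-1), ∑ i : Fin 1, (FlowAux.flow 1 ℓ z i)^2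
              ≤ ((1:ℕ):ℝ) * (2 * FlowAux.X 1 ℓ) := hE
            _ ≤ 1 * (2 * (16 * (ℓ:ℝ))) := by
                have h2X : FlowAux.X 1 ℓ ≤ 16 * (ℓ:ℝ) := hX
                push_cast
                linarith
            _ ≤ 512 * (ℓ:ℝ) := by linarith
        · -- d = 2
          have hX := FlowAux.X_d2 hl
          have hK := FlowAux.K_le_log hl
          have hgd : gd 2 ℓ = Real.log ℓ := by unfold gd; norm_num
          rw [hgd]
          have hlog : 0 ≤ Real.log ℓ := Real.log_nonneg (by linarith)
          calc ∑ z ∈ Lam 2 (2*ℓ-1), ∑ i : Fin 2, (FlowAux.flow 2 ℓ z i)^2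
              ≤ ((2:ℕ):ℝ) * (2 * FlowAux.X 2 ℓ) := hE
            _ ≤ 2 * (2 * (16 * ((FlowAux.K ℓ : ℝ) + 1))) := by
                push_cast
                linarith
            _ ≤ 2 * (2 * (16 * (6 * Real.log ℓ))) := by linarith
            _ ≤ ((2:ℕ):ℝ) * 8^(2+2) * Real.log ℓ := by
                push_cast
                nlinarith
      · -- d ≥ 3
        have hX := FlowAux.X_d3 hd3 ℓ
        have hgd : gd d ℓ = 1 := by unfold gd; rw [if_neg (by omega), if_neg (by omega)]
        rw [hgd, mul_one]
        have h8 : (8:ℝ)^(d-1) * 8 = 8^d := by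
          rw [← pow_succ]
          congr 1
          omega
        have h88 : (8:ℝ)^d ≤ 8^(d+2) := by
          apply pow_le_pow_right₀ (by norm_num)
          omega
        calc ∑ z ∈ Lam d (2*ℓ-1), ∑ i : Fin d, (FlowAux.flow d ℓ z i)^2
            ≤ (d:ℝ) * (2 * FlowAux.X d ℓ) := hE
          _ ≤ (d:ℝ) * (2 * (4 * 8^(d-1))) := by
              apply mul_le_mul_of_nonneg_left ?_ (le_of_lt hdpos)
              linarith
          _ = (d:ℝ) * (8^(d-1) * 8) := by ring
          _ = (d:ℝ) * 8^d := by rw [h8]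
          _ ≤ (d:ℝ) * 8^(d+2) := by
              apply mul_le_mul_of_nonneg_left h88 (le_of_lt hdpos)
    · -- L¹ bound
      rw [FlowAux.finsum_eq_abs d hl]
      have hL := FlowAux.l1_master d hl
      have hP := FlowAux.pow_K_le hl
      have h8 : (8:ℝ) ≤ 8^(d+2) := by
        calc (8:ℝ) = 8^1 := by norm_num
          _ ≤ 8^(d+2) := by
              apply pow_le_pow_right₀ (by norm_num)
              omega
      calc ∑ z ∈ Lam d (2*ℓ-1), ∑ i : Fin d, |FlowAux.flow d ℓ z i|
          ≤ (d:ℝ) * 2^(FlowAux.K ℓ + 2) := hL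
        _ = (d:ℝ) * 4 * 2^(FlowAux.K ℓ) := by rw [pow_add]; ring
        _ ≤ (d:ℝ) * 4 * (2 * ℓ) := by
            apply mul_le_mul_of_nonneg_left hP (by positivity)
        _ = (d:ℝ) * 8 * ℓ := by ring
        _ ≤ (d:ℝ) * 8^(d+2) * ℓ := by
            have hln : (0:ℝ) ≤ (ℓ:ℝ) := by positivity
            have : (d:ℝ) * 8 ≤ (d:ℝ) * 8^(d+2) :=
              mul_le_mul_of_nonneg_left h8 (le_of_lt hdpos)
            exact mul_le_mul_of_nonneg_right this hln
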